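/- Let {Σ_N} be an arbitrary sequence of strategy profiles on a sequence of instances of the binary voting model, with excess expected vote share f^N. Whenever f^N > 0, the fidelity satisfies A(Σ_N) ≥ 1 − 2·exp(−2·(f^N)²·N). Consequently, if liminf_{N→∞} √N·f^N = +∞, then lim_{N→∞} A(Σ_N) = 1. -/

import Mathlib

namespace Voting

/-- The two world states: `L` (low) and `H` (high). -/
inductive WState : Type
  | L
  | H
deriving DecidableEq

instance instFintypeWState : Fintype WState :=
  ⟨{WState.L, WState.H}, fun x => by cases x <;> simp⟩

/-- The two alternatives: `A` (accept) and `R` (reject). -/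
inductive Alt : Type
  | A
  | R
deriving DecidableEq

instance instFintypeAlt : Fintype Alt :=
  ⟨{Alt.A, Alt.R}, fun x => by cases x <;> simp⟩

/-- The shared parameters of a binary voting instance. -/
structure BParams where
  /-- majority threshold -/
  μ : ℝ
  hμ0 : 0 < μ
  hμ1 : μ < 1
  /-- prior of state `L` -/
  PL : ℝ
  /-- prior of state `H` -/
  PH : ℝ
  hPL : 0 < PL
  hPH : 0 < PH
  hPsum : PL + PH = 1
  /-- `Psig s ω` : probability of signal `s` in state `ω`; `true` is the signal `h`,
  `false` is the signal `l`. -/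
  Psig : Bool → WState → ℝ
  hPsig : ∀ s ω, 0 ≤ Psig s ω
  hPsigsum : ∀ ω, Psig false ω + Psig true ω = 1
  /-- positive correlation: `P_{hH} > P_{hL}` -/
  hcorr : Psig true WState.L < Psig true WState.H
  /-- upper bound of the utility functions -/
  B : ℕ
  hB : 0 < B

/-- A binary voting instance with `N` agents. -/
structure BInstance extends BParams where
  N : ℕ
  /-- the utility function of each agent -/
  u : Fin N → WState → Alt → ℕ
  hub : ∀ n ω a, u n ω a ≤ B
  huA : ∀ n, u n WState.L Alt.A < u n WState.H Alt.A
  huR : ∀ n, u n WState.H Alt.R < u n WState.L Alt.R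

/-- A (mixed) strategy profile: for each agent, the probability of voting for `A`
upon each signal. -/
abbrev Profile (I : BInstance) : Type := Fin I.N → Bool → ℝ

/-- All coordinates of the profile are genuine probabilities. -/
def ValidProfile (I : BInstance) (sp : Profile I) : Prop :=
  ∀ n s, 0 ≤ sp n s ∧ sp n s ≤ 1

/-- Probability that agent `n` votes for `A`, conditioned on the world state `ω`. -/
noncomputable def pA (I : BInstance) (sp : Profile I) (n : Fin I.N) (ω : WState) : ℝ :=
  I.Psig false ω * sp n false + I.Psig true ω * sp n true

open Finset in
/-- `lambdaA I sp ω` : the probability that at least `μ·N` agents vote for `A`,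
conditioned on the world state `ω` (conditionally on the state, the votes are independent,
agent `n` voting for `A` with probability `pA I sp n ω`). -/
noncomputable def lambdaA (I : BInstance) (sp : Profile I) (ω : WState) : ℝ :=
  ∑ v : Fin I.N → Bool,
    if I.μ * (I.N : ℝ) ≤ ((univ.filter fun n => v n = true).card : ℝ) then
      ∏ n, (if v n = true then pA I sp n ω else 1 - pA I sp n ω)
    else 0

/-- The fidelity of a strategy profile: the probability that the informed majority
decision is reached. -/
noncomputable def fid (I : BInstance) (sp : Profile I) : ℝ :=
  I.PL * (1 - lambdaA I sp WState.L) + I.PH * lambdaA I sp WState.H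

/-- The ex-ante expected utility of agent `n` under profile `sp`. -/
noncomputable def ut (I : BInstance) (sp : Profile I) (n : Fin I.N) : ℝ :=
  I.PL * (lambdaA I sp WState.L * (I.u n WState.L Alt.A : ℝ)
      + (1 - lambdaA I sp WState.L) * (I.u n WState.L Alt.R : ℝ))
    + I.PH * (lambdaA I sp WState.H * (I.u n WState.H Alt.A : ℝ)
      + (1 - lambdaA I sp WState.H) * (I.u n WState.H Alt.R : ℝ))

/-- A friendly agent prefers `A` in both states. -/
def Friendly (I : BInstance) (n : Fin I.N) : Prop :=
  ∀ ω, I.u n ω Alt.R < I.u n ω Alt.A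

/-- An unfriendly agent prefers `R` in both states. -/
def Unfriendly (I : BInstance) (n : Fin I.N) : Prop :=
  ∀ ω, I.u n ω Alt.A < I.u n ω Alt.R

/-- A contingent agent prefers `A` in state `H` and `R` in state `L`. -/
def Contingent (I : BInstance) (n : Fin I.N) : Prop :=
  I.u n WState.H Alt.R < I.u n WState.H Alt.A ∧ I.u n WState.L Alt.A < I.u n WState.L Alt.R

/-- A profile is regular if every friendly agent always votes for `A` and every
unfriendly agent always votes for `R`. -/
def Regular (I : BInstance) (sp : Profile I) : Prop :=
  (∀ n, Friendly I n → ∀ s, sp n s = 1) ∧ (∀ n, Unfriendly I n → ∀ s, sp n s = 0)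

/-- `ε`-strong Bayes Nash Equilibrium: no coalition `D` can deviate so that no member
is worse off and some member gains more than `ε`. -/
def IsEpsBNE (I : BInstance) (sp : Profile I) (ε : ℝ) : Prop :=
  ¬ ∃ (D : Set (Fin I.N)) (sp' : Profile I),
      ValidProfile I sp' ∧
      (∀ n, n ∉ D → sp' n = sp n) ∧
      (∀ n ∈ D, ut I sp n ≤ ut I sp' n) ∧
      (∃ n ∈ D, ut I sp n + ε < ut I sp' n)

/-- Number of friendly agents. -/
noncomputable def friendlyCount (I : BInstance) : ℕ := {n | Friendly I n}.ncard

/-- Number of unfriendly agents. -/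
noncomputable def unfriendlyCount (I : BInstance) : ℕ := {n | Unfriendly I n}.ncard

/-- Number of contingent agents. -/
noncomputable def contingentCount (I : BInstance) : ℕ := {n | Contingent I n}.ncard

/-- A sequence of binary voting instances sharing the same parameters, in which the
instance indexed by `N` has `N` agents. -/
structure BSeq where
  params : BParams
  inst : ℕ → BInstance
  hN : ∀ N, (inst N).N = N
  hshare : ∀ N, (inst N).toBParams = params

/-- A sequence of binary voting instances with fixed approximate fractions
`(αF, αU, αC)` of friendly, unfriendly and contingent agents. -/
structure BSeqFrac extends BSeq where
  αF : ℝ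
  αU : ℝ
  αC : ℝ
  hαF0 : 0 ≤ αF
  hαU0 : 0 ≤ αU
  hαC0 : 0 ≤ αC
  hαsum : αF + αU + αC = 1
  hαFμ : αF < params.μ
  hαUμ : αU < 1 - params.μ
  hNF : ∀ N : ℕ, friendlyCount (inst N) = ⌊αF * (N : ℝ)⌋₊
  hNU : ∀ N : ℕ, unfriendlyCount (inst N) = ⌊αU * (N : ℝ)⌋₊
  hNC : ∀ N : ℕ, contingentCount (inst N) = N - ⌊αF * (N : ℝ)⌋₊ - ⌊αU * (N : ℝ)⌋₊

/-- Excess expected vote share of `A` in state `H`. -/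
noncomputable def fH (I : BInstance) (sp : Profile I) : ℝ :=
  (∑ n, pA I sp n WState.H) / (I.N : ℝ) - I.μ

/-- Excess expected vote share of `R` in state `L`. -/
noncomputable def fL (I : BInstance) (sp : Profile I) : ℝ :=
  (∑ n, (1 - pA I sp n WState.L)) / (I.N : ℝ) - (1 - I.μ)

/-- The excess expected vote share `f = min (f_H, f_L)`. -/
noncomputable def fmin (I : BInstance) (sp : Profile I) : ℝ := min (fH I sp) (fL I sp)

end Voting

open Real

lemma gpos_aux {p : ℝ} (hp0 : 0 ≤ p) (hp1 : p ≤ 1) (x : ℝ) :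
    0 < 1 - p + p * Real.exp x := by
  rcases eq_or_lt_of_le hp0 with h | h
  · simp [← h]
  · have := Real.exp_pos x
    nlinarith

lemma hoeff_aux {p : ℝ} (hp0 : 0 ≤ p) (hp1 : p ≤ 1) (u : ℝ) :
    Real.log (1 - p + p * Real.exp u) - p * u ≤ u ^ 2 / 8 := by
  set g : ℝ → ℝ := fun x => 1 - p + p * Real.exp x with hg
  have gpos : ∀ x, 0 < g x := fun x => gpos_aux hp0 hp1 x
  set D : ℝ → ℝ := fun x => x / 4 - (p * Real.exp x / g x - p) with hD
  set G : ℝ → ℝ := fun x => x ^ 2 / 8 - (Real.log (g x) - p * x) with hG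
  have hgd : ∀ x, HasDerivAt g (p * Real.exp x) x := by
    intro x
    exact ((Real.hasDerivAt_exp x).const_mul p).const_add (1 - p)
  have hGd : ∀ x, HasDerivAt G (D x) x := by
    intro x
    have h1 : HasDerivAt (fun x : ℝ => x ^ 2 / 8) (x / 4) x := by
      have := (hasDerivAt_pow 2 x).div_const 8
      rw [show x / 4 = ((2:ℕ):ℝ) * x ^ (2 - 1) / 8 by norm_num; ring]; exact this
    have h2 : HasDerivAt (fun x => Real.log (g x)) (p * Real.exp x / g x) x :=
      (hgd x).log (gpos x).ne'
    have h3 : HasDerivAt (fun x : ℝ => p * x) p x := by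
      simpa using (hasDerivAt_id x).const_mul p
    exact h1.sub (h2.sub h3)
  have hDd : ∀ x, HasDerivAt D
      (1 / 4 - ((p * Real.exp x * g x - p * Real.exp x * (p * Real.exp x)) / g x ^ 2)) x := by
    intro x
    have h1 : HasDerivAt (fun x : ℝ => x / 4) (1 / 4) x := by
      simpa using (hasDerivAt_id x).div_const 4
    have h2 : HasDerivAt (fun x => p * Real.exp x) (p * Real.exp x) x :=
      (Real.hasDerivAt_exp x).const_mul p
    have h3 : HasDerivAt (fun x => p * Real.exp x / g x)
        ((p * Real.exp x * g x - p * Real.exp x * (p * Real.exp x)) / g x ^ 2) x :=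
      h2.div (hgd x) (gpos x).ne'
    exact h1.sub (h3.sub_const p)
  have hDmono : Monotone D := by
    apply monotone_of_hasDerivAt_nonneg hDd
    intro x
    have hgx := gpos x
    have he := Real.exp_pos x
    have key : 0 ≤ (g x - 2 * (p * Real.exp x)) ^ 2 := sq_nonneg _
    have : (p * Real.exp x * g x - p * Real.exp x * (p * Real.exp x)) / g x ^ 2 ≤ 1 / 4 := by
      rw [div_le_iff₀ (by positivity)]
      nlinarith [sq_nonneg (1 - p - p * Real.exp x), sq_nonneg (g x - 2 * (p * Real.exp x))]
    simp only [Pi.zero_apply]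
    linarith
  have hD0 : D 0 = 0 := by
    simp [hD, hg, Real.exp_zero]
  have hG0 : G 0 = 0 := by
    simp [hG, hg, Real.exp_zero]
  have key : ∀ x, 0 ≤ G x := by
    intro x
    rcases le_total 0 x with hx | hx
    · have hmono : MonotoneOn G (Set.Ici (0 : ℝ)) := by
        apply monotoneOn_of_deriv_nonneg (convex_Ici 0)
          (fun y _ => (hGd y).differentiableAt.continuousAt.continuousWithinAt)
          (fun y _ => (hGd y).differentiableAt.differentiableWithinAt)
        intro y hy
        rw [(hGd y).deriv]
        rw [interior_Ici] at hy
        have := hDmono (le_of_lt hy)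
        rw [hD0] at this
        exact this
      have := hmono (Set.self_mem_Ici) hx hx
      rwa [hG0] at this
    · have hanti : AntitoneOn G (Set.Iic (0 : ℝ)) := by
        apply antitoneOn_of_deriv_nonpos (convex_Iic 0)
          (fun y _ => (hGd y).differentiableAt.continuousAt.continuousWithinAt)
          (fun y _ => (hGd y).differentiableAt.differentiableWithinAt)
        intro y hy
        rw [(hGd y).deriv]
        rw [interior_Iic] at hy
        have := hDmono (le_of_lt hy)
        rw [hD0] at this
        exact this
      have := hanti hx (Set.self_mem_Iic) hx
      rwa [hG0] at this
  have := key u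
  simp only [hG, hg] at this
  linarith

lemma hoeffding_lemma {p : ℝ} (hp0 : 0 ≤ p) (hp1 : p ≤ 1) (t : ℝ) :
    p * Real.exp (t * (p - 1)) + (1 - p) * Real.exp (t * p) ≤ Real.exp (t ^ 2 / 8) := by
  have h := hoeff_aux hp0 hp1 (-t)
  have gpos := gpos_aux hp0 hp1 (-t)
  have heq : p * Real.exp (t * (p - 1)) + (1 - p) * Real.exp (t * p)
      = Real.exp (Real.log (1 - p + p * Real.exp (-t)) - p * (-t)) := by
    rw [show t * (p - 1) = -t + t * p by ring, Real.exp_add,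
      show Real.log (1 - p + p * Real.exp (-t)) - p * (-t)
          = Real.log (1 - p + p * Real.exp (-t)) + t * p by ring,
      Real.exp_add, Real.exp_log gpos]
    ring
  rw [heq]
  have : (-t) ^ 2 = t ^ 2 := by ring
  rw [this] at h
  exact Real.exp_le_exp.mpr h

open Finset

lemma factor_bound {p : ℝ} (hp0 : 0 ≤ p) (hp1 : p ≤ 1) (t : ℝ) :
    1 - p + p * Real.exp t ≤ Real.exp (t * p + t ^ 2 / 8) := by
  have h := hoeffding_lemma hp0 hp1 (-t)
  have h2 := mul_le_mul_of_nonneg_left h (Real.exp_pos (t * p)).le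
  have e1 : Real.exp (t * p) * (p * Real.exp (-t * (p - 1)) + (1 - p) * Real.exp (-t * p))
      = 1 - p + p * Real.exp t := by
    rw [mul_add, ← mul_assoc, ← mul_assoc, mul_comm (Real.exp (t*p)) p,
      mul_comm (Real.exp (t*p)) (1 - p), mul_assoc, mul_assoc, ← Real.exp_add, ← Real.exp_add,
      show t * p + -t * (p - 1) = t by ring, show t * p + -t * p = 0 by ring, Real.exp_zero]
    ring
  have e2 : Real.exp (t * p) * Real.exp ((-t) ^ 2 / 8) = Real.exp (t * p + t ^ 2 / 8) := by
    rw [← Real.exp_add, show (-t) ^ 2 = t ^ 2 by ring]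
  rw [e1, e2] at h2
  exact h2

section Tail
variable {N : ℕ} {p : Fin N → ℝ}

noncomputable def wgt (p : Fin N → ℝ) (v : Fin N → Bool) : ℝ :=
  ∏ n, (if v n = true then p n else 1 - p n)

lemma wgt_nonneg (hp0 : ∀ n, 0 ≤ p n) (hp1 : ∀ n, p n ≤ 1) (v : Fin N → Bool) :
    0 ≤ wgt p v := by
  refine Finset.prod_nonneg fun n _ => ?_
  split
  · exact hp0 n
  · linarith [hp1 n]

lemma card_eq_sum (v : Fin N → Bool) :
    (((univ : Finset (Fin N)).filter fun n => v n = true).card : ℝ)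
      = ∑ n, (if v n = true then (1 : ℝ) else 0) := by
  rw [Finset.card_filter]
  push_cast
  rfl

lemma mgf_eq (p : Fin N → ℝ) (t : ℝ) :
    ∑ v : Fin N → Bool, wgt p v *
        Real.exp (t * (((univ : Finset (Fin N)).filter fun n => v n = true).card : ℝ))
      = ∏ n, (1 - p n + p n * Real.exp t) := by
  have key : ∀ v : Fin N → Bool, wgt p v *
      Real.exp (t * (((univ : Finset (Fin N)).filter fun n => v n = true).card : ℝ))
      = ∏ n, (if v n = true then p n * Real.exp t else 1 - p n) := by
    intro v
    rw [card_eq_sum, Finset.mul_sum, Real.exp_sum, wgt, ← Finset.prod_mul_distrib]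
    refine Finset.prod_congr rfl fun n _ => ?_
    by_cases h : v n = true <;> simp [h]
  rw [Finset.sum_congr rfl fun v _ => key v]
  rw [← Fintype.prod_sum fun n (b : Bool) => if b = true then p n * Real.exp t else 1 - p n]
  refine Finset.prod_congr rfl fun n _ => ?_
  simp [Fintype.sum_bool]
  ring

lemma wgt_sum_one (p : Fin N → ℝ) :
    ∑ v : Fin N → Bool, wgt p v = 1 := by
  have := mgf_eq p 0
  simp only [Real.exp_zero, mul_zero, zero_mul, mul_one] at this
  simp only [wgt] at this ⊢
  rw [this]
  exact Finset.prod_eq_one fun n _ => by ring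

lemma tail_upper (hN : 0 < N) (hp0 : ∀ n, 0 ≤ p n) (hp1 : ∀ n, p n ≤ 1)
    {c : ℝ} (hc : 0 < c) :
    ∑ v : Fin N → Bool,
        (if (∑ n, p n) + c ≤ (((univ : Finset (Fin N)).filter fun n => v n = true).card : ℝ)
          then wgt p v else 0)
      ≤ Real.exp (-2 * c ^ 2 / N) := by
  set t : ℝ := 4 * c / N with ht
  have hNpos : (0 : ℝ) < N := by exact_mod_cast hN
  have htpos : 0 < t := by positivity
  set s : ℝ := ∑ n, p n with hs
  have step1 : ∑ v : Fin N → Bool,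
      (if s + c ≤ (((univ : Finset (Fin N)).filter fun n => v n = true).card : ℝ)
        then wgt p v else 0)
      ≤ ∑ v : Fin N → Bool, wgt p v *
          Real.exp (t * ((((univ : Finset (Fin N)).filter fun n => v n = true).card : ℝ) - (s + c))) := by
    refine Finset.sum_le_sum fun v _ => ?_
    have hw := wgt_nonneg hp0 hp1 v
    split
    · rename_i hcond
      nth_rewrite 1 [← mul_one (wgt p v)]
      refine mul_le_mul_of_nonneg_left ?_ hw
      have h0 : (0:ℝ) ≤ t * ((((univ : Finset (Fin N)).filter fun n => v n = true).card : ℝ) - (s + c)) :=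
        mul_nonneg htpos.le (by linarith)
      calc (1:ℝ) = Real.exp 0 := Real.exp_zero.symm
        _ ≤ _ := Real.exp_le_exp.mpr h0
    · positivity
  have step2 : ∑ v : Fin N → Bool, wgt p v *
      Real.exp (t * ((((univ : Finset (Fin N)).filter fun n => v n = true).card : ℝ) - (s + c)))
      = Real.exp (-(t * (s + c))) * ∏ n, (1 - p n + p n * Real.exp t) := by
    rw [← mgf_eq p t, Finset.mul_sum]
    refine Finset.sum_congr rfl fun v _ => ?_
    rw [mul_sub, Real.exp_sub, Real.exp_neg]
    field_simp
  have step3 : ∏ n, (1 - p n + p n * Real.exp t) ≤ Real.exp (t * s + N * (t ^ 2 / 8)) := by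
    have hb : ∀ n ∈ (univ : Finset (Fin N)), 1 - p n + p n * Real.exp t
        ≤ Real.exp (t * p n + t ^ 2 / 8) := fun n _ =>
      factor_bound (hp0 n) (hp1 n) t
    calc ∏ n, (1 - p n + p n * Real.exp t)
        ≤ ∏ n, Real.exp (t * p n + t ^ 2 / 8) := by
          refine Finset.prod_le_prod (fun n _ => ?_) hb
          have := Real.exp_pos t
          have := hp0 n; have := hp1 n
          nlinarith
      _ = Real.exp (∑ n, (t * p n + t ^ 2 / 8)) := (Real.exp_sum _ _).symm
      _ = Real.exp (t * s + N * (t ^ 2 / 8)) := by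
          rw [Finset.sum_add_distrib, Finset.sum_const, ← Finset.mul_sum, hs]
          simp [nsmul_eq_mul]
  calc ∑ v : Fin N → Bool,
        (if s + c ≤ (((univ : Finset (Fin N)).filter fun n => v n = true).card : ℝ)
          then wgt p v else 0)
      ≤ Real.exp (-(t * (s + c))) * ∏ n, (1 - p n + p n * Real.exp t) := by
        rw [← step2]; exact step1
    _ ≤ Real.exp (-(t * (s + c))) * Real.exp (t * s + N * (t ^ 2 / 8)) :=
        mul_le_mul_of_nonneg_left step3 (Real.exp_pos _).le
    _ = Real.exp (-2 * c ^ 2 / N) := by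
        rw [← Real.exp_add]
        congr 1
        rw [ht]
        field_simp
        ring
end Tail


open Finset Filter

lemma tail_lower {N : ℕ} {p : Fin N → ℝ} (hN : 0 < N) (hp0 : ∀ n, 0 ≤ p n)
    (hp1 : ∀ n, p n ≤ 1) {c : ℝ} (hc : 0 < c) :
    ∑ v : Fin N → Bool,
        (if (((univ : Finset (Fin N)).filter fun n => v n = true).card : ℝ) ≤ (∑ n, p n) - c
          then wgt p v else 0)
      ≤ Real.exp (-2 * c ^ 2 / N) := by
  have hq0 : ∀ n, 0 ≤ 1 - p n := fun n => by linarith [hp1 n]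
  have hq1 : ∀ n, (1 : ℝ) - p n ≤ 1 := fun n => by linarith [hp0 n]
  have h := tail_upper (p := fun n => 1 - p n) hN hq0 hq1 hc
  refine le_trans (le_of_eq ?_) h
  refine Fintype.sum_equiv
    ⟨fun v n => !(v n), fun v n => !(v n),
      fun v => by funext n; simp, fun v => by funext n; simp⟩ _ _ (fun v => ?_)
  simp only [Equiv.coe_fn_mk]
  have hcard : ((((univ : Finset (Fin N)).filter fun n => (!(v n)) = true).card : ℝ))
      = (N : ℝ) - (((univ : Finset (Fin N)).filter fun n => v n = true).card : ℝ) := by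
    have h1 : ((univ : Finset (Fin N)).filter fun n => (!(v n)) = true)
        = ((univ : Finset (Fin N)).filter fun n => ¬ (v n = true)) := by
      apply Finset.filter_congr; intro n _; simp
    have h2 := Finset.card_filter_add_card_filter_not
      (s := (univ : Finset (Fin N))) (p := fun n => v n = true)
    rw [h1]
    have h3 : (((univ : Finset (Fin N)).filter fun n => v n = true).card
        + ((univ : Finset (Fin N)).filter fun n => ¬ (v n = true)).card) = N := by
      simpa using h2
    have h4 := congrArg (fun k : ℕ => (k : ℝ)) h3
    push_cast at h4
    linarith
  have hsum : ∑ n, (1 - p n) = (N : ℝ) - ∑ n, p n := by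
    rw [Finset.sum_sub_distrib]
    simp
  have hw : wgt (fun n => 1 - p n) (fun n => !(v n)) = wgt p v := by
    unfold wgt
    refine Finset.prod_congr rfl fun n _ => ?_
    cases h : v n <;> simp [h]
  rw [hw]
  refine if_congr ?_ rfl rfl
  rw [hcard, hsum]
  constructor <;> intro <;> linarith

namespace Voting

lemma pA_nonneg (I : BInstance) (sp : Profile I) (h : ValidProfile I sp)
    (n : Fin I.N) (ω : WState) : 0 ≤ pA I sp n ω :=
  add_nonneg (mul_nonneg (I.hPsig false ω) (h n false).1)
    (mul_nonneg (I.hPsig true ω) (h n true).1)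

lemma pA_le_one (I : BInstance) (sp : Profile I) (h : ValidProfile I sp)
    (n : Fin I.N) (ω : WState) : pA I sp n ω ≤ 1 := by
  have h1 := mul_le_mul_of_nonneg_left (h n false).2 (I.hPsig false ω)
  have h2 := mul_le_mul_of_nonneg_left (h n true).2 (I.hPsig true ω)
  have h3 := I.hPsigsum ω
  unfold pA
  linarith

lemma lambdaA_eq (I : BInstance) (sp : Profile I) (ω : WState) :
    lambdaA I sp ω = ∑ v : Fin I.N → Bool,
      (if I.μ * (I.N : ℝ) ≤ (((univ : Finset (Fin I.N)).filter fun n => v n = true).card : ℝ)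
        then wgt (fun n => pA I sp n ω) v else 0) := rfl

lemma lambdaA_nonneg (I : BInstance) (sp : Profile I) (h : ValidProfile I sp) (ω : WState) :
    0 ≤ lambdaA I sp ω := by
  rw [lambdaA_eq]
  refine Finset.sum_nonneg fun v _ => ?_
  split
  · exact wgt_nonneg (fun n => pA_nonneg I sp h n ω) (fun n => pA_le_one I sp h n ω) v
  · exact le_rfl

lemma lambdaA_le_one (I : BInstance) (sp : Profile I) (h : ValidProfile I sp) (ω : WState) :
    lambdaA I sp ω ≤ 1 := by
  rw [lambdaA_eq, ← wgt_sum_one (fun n => pA I sp n ω)]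
  refine Finset.sum_le_sum fun v _ => ?_
  split
  · exact le_rfl
  · exact wgt_nonneg (fun n => pA_nonneg I sp h n ω) (fun n => pA_le_one I sp h n ω) v

lemma lambdaH_bound (I : BInstance) (sp : Profile I) (hv : ValidProfile I sp)
    (hf : 0 < fH I sp) :
    1 - lambdaA I sp WState.H ≤ Real.exp (-2 * (fH I sp) ^ 2 * (I.N : ℝ)) := by
  have hp0 : ∀ n, 0 ≤ pA I sp n WState.H := fun n => pA_nonneg I sp hv n _
  have hp1 : ∀ n, pA I sp n WState.H ≤ 1 := fun n => pA_le_one I sp hv n _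
  have hN : 0 < I.N := by
    by_contra h
    have hN0 : I.N = 0 := by omega
    have : fH I sp = -I.μ := by
      unfold fH
      haveI : IsEmpty (Fin I.N) := by rw [hN0]; infer_instance
      rw [Finset.univ_eq_empty, Finset.sum_empty, hN0]
      simp
    rw [this] at hf
    linarith [I.hμ0]
  have hNR : (0 : ℝ) < (I.N : ℝ) := by exact_mod_cast hN
  have hc : 0 < (I.N : ℝ) * fH I sp := by positivity
  have hμeq : (∑ n, pA I sp n WState.H) - (I.N : ℝ) * fH I sp = I.μ * (I.N : ℝ) := by
    have : fH I sp = (∑ n, pA I sp n WState.H) / (I.N : ℝ) - I.μ := rfl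
    rw [this]
    field_simp
    ring
  have hsplit : lambdaA I sp WState.H
      + ∑ v : Fin I.N → Bool,
          (if ¬ (I.μ * (I.N : ℝ)
              ≤ (((univ : Finset (Fin I.N)).filter fun n => v n = true).card : ℝ))
            then wgt (fun n => pA I sp n WState.H) v else 0)
      = 1 := by
    rw [lambdaA_eq, ← wgt_sum_one (fun n => pA I sp n WState.H), ← Finset.sum_add_distrib]
    refine Finset.sum_congr rfl fun v _ => ?_
    by_cases h : I.μ * (I.N : ℝ)
        ≤ (((univ : Finset (Fin I.N)).filter fun n => v n = true).card : ℝ) <;> simp [h]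
  have hle : ∑ v : Fin I.N → Bool,
        (if ¬ (I.μ * (I.N : ℝ)
            ≤ (((univ : Finset (Fin I.N)).filter fun n => v n = true).card : ℝ))
          then wgt (fun n => pA I sp n WState.H) v else 0)
      ≤ ∑ v : Fin I.N → Bool,
        (if (((univ : Finset (Fin I.N)).filter fun n => v n = true).card : ℝ)
            ≤ (∑ n, pA I sp n WState.H) - (I.N : ℝ) * fH I sp
          then wgt (fun n => pA I sp n WState.H) v else 0) := by
    refine Finset.sum_le_sum fun v _ => ?_
    have hw := wgt_nonneg hp0 hp1 v
    split
    · rename_i h1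
      push_neg at h1
      rw [if_pos (by rw [hμeq]; linarith)]
    · split
      · exact hw
      · exact le_rfl
  have htail := tail_lower (p := fun n => pA I sp n WState.H) hN hp0 hp1 hc
  have hexp : Real.exp (-2 * ((I.N : ℝ) * fH I sp) ^ 2 / (I.N : ℝ))
      = Real.exp (-2 * (fH I sp) ^ 2 * (I.N : ℝ)) := by
    congr 1
    field_simp
  rw [hexp] at htail
  linarith

lemma lambdaL_bound (I : BInstance) (sp : Profile I) (hv : ValidProfile I sp)
    (hf : 0 < fL I sp) :
    lambdaA I sp WState.L ≤ Real.exp (-2 * (fL I sp) ^ 2 * (I.N : ℝ)) := by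
  have hp0 : ∀ n, 0 ≤ pA I sp n WState.L := fun n => pA_nonneg I sp hv n _
  have hp1 : ∀ n, pA I sp n WState.L ≤ 1 := fun n => pA_le_one I sp hv n _
  have hN : 0 < I.N := by
    by_contra h
    have hN0 : I.N = 0 := by omega
    have : fL I sp = -(1 - I.μ) := by
      unfold fL
      haveI : IsEmpty (Fin I.N) := by rw [hN0]; infer_instance
      rw [Finset.univ_eq_empty, Finset.sum_empty, hN0]
      simp
    rw [this] at hf
    linarith [I.hμ1]
  have hNR : (0 : ℝ) < (I.N : ℝ) := by exact_mod_cast hN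
  have hc : 0 < (I.N : ℝ) * fL I sp := by positivity
  have hsum1 : ∑ n, (1 - pA I sp n WState.L) = (I.N : ℝ) - ∑ n, pA I sp n WState.L := by
    rw [Finset.sum_sub_distrib]
    simp
  have hμeq : (∑ n, pA I sp n WState.L) + (I.N : ℝ) * fL I sp = I.μ * (I.N : ℝ) := by
    have h1 : fL I sp = (∑ n, (1 - pA I sp n WState.L)) / (I.N : ℝ) - (1 - I.μ) := rfl
    rw [h1, hsum1]
    field_simp
    ring
  have hle : lambdaA I sp WState.L
      ≤ ∑ v : Fin I.N → Bool,
        (if (∑ n, pA I sp n WState.L) + (I.N : ℝ) * fL I sp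
            ≤ (((univ : Finset (Fin I.N)).filter fun n => v n = true).card : ℝ)
          then wgt (fun n => pA I sp n WState.L) v else 0) := by
    rw [lambdaA_eq]
    refine Finset.sum_le_sum fun v _ => ?_
    have hw := wgt_nonneg hp0 hp1 v
    split
    · rename_i h1
      rw [if_pos (by rw [hμeq]; linarith)]
    · split
      · exact hw
      · exact le_rfl
  have htail := tail_upper (p := fun n => pA I sp n WState.L) hN hp0 hp1 hc
  have hexp : Real.exp (-2 * ((I.N : ℝ) * fL I sp) ^ 2 / (I.N : ℝ))
      = Real.exp (-2 * (fL I sp) ^ 2 * (I.N : ℝ)) := by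
    congr 1
    field_simp
  rw [hexp] at htail
  linarith

lemma fid_le_one (I : BInstance) (sp : Profile I) (hv : ValidProfile I sp) :
    fid I sp ≤ 1 := by
  have h1 := lambdaA_nonneg I sp hv WState.L
  have h2 := lambdaA_le_one I sp hv WState.H
  have h3 := I.hPL
  have h4 := I.hPH
  have h5 := I.hPsum
  unfold fid
  nlinarith

end Voting

namespace Voting

/-- Theorem 4, first case. For any sequence of strategy profiles,
whenever the excess expected vote share `f^N` is positive the fidelity is at least
`1 - 2·exp(-2·(f^N)²·N)`; consequently, if `liminf √N·f^N = +∞` (i.e. `√N·f^N → ∞`),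
the fidelities converge to `1`. -/
theorem fidelity_lower_bound_of_excess_share (S : BSeq)
    (sp : ∀ N : ℕ, Profile (S.inst N))
    (hval : ∀ N, ValidProfile (S.inst N) (sp N)) :
    (∀ N : ℕ, 0 < fmin (S.inst N) (sp N) →
      1 - 2 * Real.exp (-2 * (fmin (S.inst N) (sp N)) ^ 2 * (N : ℝ)) ≤
        fid (S.inst N) (sp N)) ∧
    (Filter.Tendsto (fun N : ℕ => Real.sqrt (N : ℝ) * fmin (S.inst N) (sp N))
        Filter.atTop Filter.atTop →
      Filter.Tendsto (fun N => fid (S.inst N) (sp N)) Filter.atTop (nhds 1)) := by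
  have main : ∀ N : ℕ, 0 < fmin (S.inst N) (sp N) →
      1 - 2 * Real.exp (-2 * (fmin (S.inst N) (sp N)) ^ 2 * (N : ℝ)) ≤
        fid (S.inst N) (sp N) := by
    intro N hpos
    have hNI : ((S.inst N).N : ℝ) = (N : ℝ) := by rw [S.hN N]
    have hfH : 0 < fH (S.inst N) (sp N) := lt_of_lt_of_le hpos (min_le_left _ _)
    have hfL : 0 < fL (S.inst N) (sp N) := lt_of_lt_of_le hpos (min_le_right _ _)
    have h1 := lambdaH_bound (S.inst N) (sp N) (hval N) hfH
    have h2 := lambdaL_bound (S.inst N) (sp N) (hval N) hfL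
    set E := Real.exp (-2 * (fmin (S.inst N) (sp N)) ^ 2 * (N : ℝ)) with hE
    have hNnn : (0 : ℝ) ≤ (N : ℝ) := Nat.cast_nonneg N
    have hmH : fmin (S.inst N) (sp N) ≤ fH (S.inst N) (sp N) := min_le_left _ _
    have hmL : fmin (S.inst N) (sp N) ≤ fL (S.inst N) (sp N) := min_le_right _ _
    have hE1 : Real.exp (-2 * (fH (S.inst N) (sp N)) ^ 2 * ((S.inst N).N : ℝ)) ≤ E := by
      rw [hE, hNI]
      apply Real.exp_le_exp.mpr
      have hsq : (fmin (S.inst N) (sp N)) ^ 2 ≤ (fH (S.inst N) (sp N)) ^ 2 :=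
        pow_le_pow_left₀ hpos.le hmH 2
      nlinarith [mul_le_mul_of_nonneg_right hsq hNnn]
    have hE2 : Real.exp (-2 * (fL (S.inst N) (sp N)) ^ 2 * ((S.inst N).N : ℝ)) ≤ E := by
      rw [hE, hNI]
      apply Real.exp_le_exp.mpr
      have hsq : (fmin (S.inst N) (sp N)) ^ 2 ≤ (fL (S.inst N) (sp N)) ^ 2 :=
        pow_le_pow_left₀ hpos.le hmL 2
      nlinarith [mul_le_mul_of_nonneg_right hsq hNnn]
    have hlamL0 := lambdaA_nonneg (S.inst N) (sp N) (hval N) WState.L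
    have hlamH1 := lambdaA_le_one (S.inst N) (sp N) (hval N) WState.H
    have hPL := (S.inst N).hPL
    have hPH := (S.inst N).hPH
    have hPsum := (S.inst N).hPsum
    have hEpos : 0 < E := Real.exp_pos _
    have ha : 1 - E ≤ 1 - lambdaA (S.inst N) (sp N) WState.L := by linarith
    have hb : 1 - E ≤ lambdaA (S.inst N) (sp N) WState.H := by linarith
    have hc1 := mul_le_mul_of_nonneg_left ha hPL.le
    have hc2 := mul_le_mul_of_nonneg_left hb hPH.le
    unfold fid
    nlinarith
  refine ⟨main, ?_⟩
  intro htend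
  have hev : ∀ᶠ N : ℕ in Filter.atTop,
      1 - 2 * Real.exp (-2 * (Real.sqrt (N : ℝ) * fmin (S.inst N) (sp N)) ^ 2)
        ≤ fid (S.inst N) (sp N) := by
    filter_upwards [htend.eventually_gt_atTop 0, Filter.eventually_ge_atTop 1] with N h1 h2
    have hN1 : (1 : ℝ) ≤ (N : ℝ) := by exact_mod_cast h2
    have hs : (0 : ℝ) < Real.sqrt (N : ℝ) := Real.sqrt_pos.mpr (by linarith)
    have hfpos : 0 < fmin (S.inst N) (sp N) := by nlinarith
    have := main N hfpos
    have heq : -2 * (Real.sqrt (N : ℝ) * fmin (S.inst N) (sp N)) ^ 2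
        = -2 * (fmin (S.inst N) (sp N)) ^ 2 * (N : ℝ) := by
      rw [mul_pow, Real.sq_sqrt (by linarith : (0:ℝ) ≤ (N:ℝ))]
      ring
    rw [heq]
    exact this
  have hub : ∀ᶠ N in Filter.atTop, fid (S.inst N) (sp N) ≤ 1 :=
    Filter.Eventually.of_forall fun N => fid_le_one (S.inst N) (sp N) (hval N)
  have hlim : Filter.Tendsto
      (fun N : ℕ => 1 - 2 * Real.exp (-2 * (Real.sqrt (N : ℝ) * fmin (S.inst N) (sp N)) ^ 2))
      Filter.atTop (nhds 1) := by
    have h1 : Filter.Tendsto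
        (fun N : ℕ => (Real.sqrt (N : ℝ) * fmin (S.inst N) (sp N)) ^ 2)
        Filter.atTop Filter.atTop := by
      have := (tendsto_pow_atTop (α := ℝ) (n := 2) two_ne_zero).comp htend
      simpa [Function.comp_def] using this
    have h2 := h1.const_mul_atTop_of_neg (by norm_num : (-2 : ℝ) < 0)
    have h3 : Filter.Tendsto
        (fun N : ℕ => Real.exp (-2 * (Real.sqrt (N : ℝ) * fmin (S.inst N) (sp N)) ^ 2))
        Filter.atTop (nhds 0) := by
      have := Real.tendsto_exp_atBot.comp h2
      simpa [Function.comp_def, neg_mul] using this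
    have h4 : Filter.Tendsto
        (fun N : ℕ => 1 - 2 * Real.exp (-2 * (Real.sqrt (N : ℝ) * fmin (S.inst N) (sp N)) ^ 2))
        Filter.atTop (nhds (1 - 2 * 0)) :=
      Filter.Tendsto.sub tendsto_const_nhds (Filter.Tendsto.const_mul 2 h3)
    simpa using h4
  exact tendsto_of_tendsto_of_tendsto_of_le_of_le' hlim tendsto_const_nhds hev hub


end Voting
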